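/- Fix a > 0, ξ ∈ [0,1] and γ > γ_1, and set k₀(γ) := c_1/((1 + γ_1/γ)² + 1). Then for every ζ = x + iy with x > γ and |y| > x, the series defining ℓ_a(ζ) converges absolutely and |ℓ_a(x + iy)| > a^{ξ} · √(2 γ k₀(γ)). -/

import Mathlib

set_option maxHeartbeats 1000000

/-- Fix `a > 0`, `ξ ∈ [0,1]`, `γ' > γ 0` and set
`k₀ = c 0 / ((1 + γ 0 / γ')² + 1)`. Then for every `ζ = x + iy` with `x > γ'` and `|y| > x`,
the series defining `ℓ_a ζ` converges absolutely and `‖ℓ_a (x+iy)‖ > a^ξ * √(2 γ' k₀)`.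
(Sequences are indexed by `ℕ`, so `c 0, γ 0` correspond to `c_1, γ_1`.) -/
theorem stmt_3
    (c γs : ℕ → ℝ)
    (hc : ∀ j, 0 < c j)
    (hγ0 : 0 < γs 0)
    (hγmono : StrictMono γs)
    (hγtop : Filter.Tendsto γs Filter.atTop Filter.atTop)
    (hSsum : Summable fun j => c j / γs j)
    (hS : (∑' j, c j / γs j) < 1)
    (a ξ : ℝ) (ha : 0 < a) (hξ : ξ ∈ Set.Icc (0:ℝ) 1)
    (γ' : ℝ) (hγ' : γs 0 < γ')
    (k₀ : ℝ) (hk₀ : k₀ = c 0 / ((1 + γs 0 / γ') ^ 2 + 1))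
    (ℓ : ℂ → ℂ)
    (hℓ : ∀ ζ, ℓ ζ = ζ ^ 2 + (a : ℂ) ^ 2
        - ((a ^ (2 * ξ) : ℝ) : ℂ) * ∑' k, (c k : ℂ) / (ζ + (γs k : ℂ))) :
    ∀ x y : ℝ, γ' < x → x < |y| →
      (Summable fun k => ‖(c k : ℂ) / (((x : ℂ) + (y : ℂ) * Complex.I) + (γs k : ℂ))‖) ∧
      a ^ ξ * Real.sqrt (2 * γ' * k₀) < ‖ℓ ((x : ℂ) + (y : ℂ) * Complex.I)‖ := by
  intro x y hx hy
  obtain ⟨hξ0, hξ1⟩ := hξ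
  have hγpos : ∀ k, (0:ℝ) < γs k := fun k => lt_of_lt_of_le hγ0 (hγmono.monotone (Nat.zero_le k))
  have hγ'pos : (0:ℝ) < γ' := hγ0.trans hγ'
  have hxpos : (0:ℝ) < x := hγ'pos.trans hx
  have hypos : (0:ℝ) < |y| := hxpos.trans hy
  set ζ : ℂ := (x:ℂ) + (y:ℂ) * Complex.I with hζdef
  have hwre : ∀ k, (ζ + (γs k : ℂ)).re = x + γs k := by intro k; simp [hζdef]
  have hwim : ∀ k, (ζ + (γs k : ℂ)).im = y := by intro k; simp [hζdef]
  have hDpos : ∀ k, 0 < (x + γs k)^2 + y^2 := by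
    intro k
    have h1 : 0 < x + γs k := add_pos hxpos (hγpos k)
    nlinarith [sq_nonneg y]
  -- norm bound
  have habs : ∀ k, γs k ≤ ‖ζ + (γs k : ℂ)‖ := by
    intro k
    calc γs k ≤ |(ζ + (γs k : ℂ)).re| := by
          rw [hwre]; rw [abs_of_pos (add_pos hxpos (hγpos k))]; linarith
      _ ≤ ‖ζ + (γs k : ℂ)‖ := Complex.abs_re_le_norm _
  have hnorm : ∀ k, ‖(c k : ℂ) / (ζ + (γs k : ℂ))‖ ≤ c k / γs k := by
    intro k
    rw [norm_div, Complex.norm_real, Real.norm_of_nonneg (hc k).le]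
    exact div_le_div_of_nonneg_left (hc k).le (hγpos k) (habs k)
  have hSumNorm : Summable fun k => ‖(c k : ℂ) / (ζ + (γs k : ℂ))‖ :=
    Summable.of_nonneg_of_le (fun k => norm_nonneg _) hnorm hSsum
  refine ⟨hSumNorm, ?_⟩
  have hsum : Summable fun k => (c k : ℂ) / (ζ + (γs k : ℂ)) := hSumNorm.of_norm
  -- imaginary parts
  have hfim : ∀ k, ((c k : ℂ) / (ζ + (γs k : ℂ))).im
      = -y * (c k / ((x + γs k)^2 + y^2)) := by
    intro k
    have hD : Complex.normSq (ζ + (γs k : ℂ)) = (x + γs k)^2 + y^2 := by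
      rw [Complex.normSq_apply, hwre, hwim]; ring
    rw [Complex.div_im, hD, hwre, hwim]
    simp only [Complex.ofReal_im, Complex.ofReal_re]
    ring
  have hgsum : Summable fun k => c k / ((x + γs k)^2 + y^2) := by
    apply Summable.of_nonneg_of_le (fun k => div_nonneg (hc k).le (hDpos k).le)
      (fun k => ?_) (hSsum.div_const (γs 0))
    have hle : γs k * γs 0 ≤ (x + γs k)^2 + y^2 := by
      have h0k : γs 0 ≤ γs k := hγmono.monotone (Nat.zero_le k)
      nlinarith [sq_nonneg y, hγpos k, hxpos]
    calc c k / ((x + γs k)^2 + y^2) ≤ c k / (γs k * γs 0) := by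
          apply div_le_div_of_nonneg_left (hc k).le _ hle
          exact mul_pos (hγpos k) hγ0
      _ = c k / γs k / γs 0 := by rw [div_div]
  have himtsum : (∑' k, (c k : ℂ) / (ζ + (γs k : ℂ))).im
      = -y * ∑' k, c k / ((x + γs k)^2 + y^2) := by
    have h1 : (∑' k, (c k : ℂ) / (ζ + (γs k : ℂ))).im
        = ∑' k, ((c k : ℂ) / (ζ + (γs k : ℂ))).im := by
      have := Complex.imCLM.map_tsum hsum
      simpa using this
    rw [h1]
    simp_rw [hfim]
    exact tsum_mul_left
  set G : ℝ := ∑' k, c k / ((x + γs k)^2 + y^2) with hGdef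
  have hGnonneg : 0 ≤ G := tsum_nonneg fun k => div_nonneg (hc k).le (hDpos k).le
  have hG0 : c 0 / ((x + γs 0)^2 + y^2) ≤ G :=
    Summable.le_tsum hgsum 0 fun j _ => div_nonneg (hc j).le (hDpos j).le
  have hA2pos : 0 < a ^ (2 * ξ) := Real.rpow_pos_of_pos ha _
  -- imaginary part of ℓ ζ
  have him : (ℓ ζ).im = y * (2 * x + a ^ (2 * ξ) * G) := by
    rw [hℓ]
    simp only [Complex.sub_im, Complex.add_im, Complex.mul_im, Complex.ofReal_re,
      Complex.ofReal_im, pow_two, Complex.mul_re]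
    rw [himtsum]
    have hre : ζ.re = x := by simp [hζdef]
    have him' : ζ.im = y := by simp [hζdef]
    rw [hre, him']
    ring
  have hlower : |y| * (2 * x + a ^ (2 * ξ) * G) ≤ ‖ℓ ζ‖ := by
    calc |y| * (2 * x + a ^ (2 * ξ) * G)
        = |(ℓ ζ).im| := by
          rw [him, abs_mul, abs_of_nonneg (by
            have := mul_nonneg hA2pos.le hGnonneg; linarith : (0:ℝ) ≤ 2 * x + a ^ (2*ξ) * G)]
      _ ≤ ‖ℓ ζ‖ := Complex.abs_im_le_norm _
      _ = ‖ℓ ζ‖ := rfl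
  refine lt_of_lt_of_le ?_ hlower
  -- Now the numeric inequality
  set R : ℝ := |y| * (2 * x + a ^ (2 * ξ) * G) with hRdef
  have hRpos : 0 < R := by
    apply mul_pos hypos
    nlinarith [mul_nonneg hA2pos.le hGnonneg]
  have hk₀pos : 0 < k₀ := by
    rw [hk₀]; exact div_pos (hc 0) (by positivity)
  have hLnonneg : 0 ≤ a ^ ξ * Real.sqrt (2 * γ' * k₀) := by positivity
  -- compare squares
  refine lt_of_pow_lt_pow_left₀ 2 hRpos.le ?_
  have hLsq : (a ^ ξ * Real.sqrt (2 * γ' * k₀))^2 = a ^ (2 * ξ) * (2 * γ' * k₀) := by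
    rw [mul_pow, Real.sq_sqrt (by positivity)]
    congr 1
    rw [← Real.rpow_natCast (a ^ ξ) 2, ← Real.rpow_mul ha.le]
    norm_num [mul_comm]
  rw [hLsq]
  -- key: with D0 := (x+γ0)²+y², E := (1+γ0/γ')²+1 : γ' * D0 < x * y² * E
  set D0 : ℝ := (x + γs 0)^2 + y^2 with hD0def
  set E : ℝ := (1 + γs 0 / γ')^2 + 1 with hEdef
  have hD0pos : 0 < D0 := hDpos 0
  have hEpos : 0 < E := by positivity
  have hγ'y : γ' < |y| := hx.trans hy
  have hDE : γ' * D0 < x * (y^2 * E) := by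
    have h2 : γs 0 < |y| * (γs 0 / γ') := by
      rw [mul_div_assoc', lt_div_iff₀ hγ'pos]
      nlinarith [hγ'y, hγ0]
    have h1 : x + γs 0 < |y| * (1 + γs 0 / γ') := by
      have hexp : |y| * (1 + γs 0 / γ') = |y| + |y| * (γs 0 / γ') := by ring
      rw [hexp]; linarith [hy]
    have h3 : (x + γs 0)^2 < y^2 * (1 + γs 0 / γ')^2 := by
      calc (x + γs 0)^2 < (|y| * (1 + γs 0 / γ'))^2 := by
            apply sq_lt_sq' _ h1
            have hp : 0 < |y| * (1 + γs 0 / γ') :=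
              mul_pos hypos (by positivity)
            nlinarith [hγ0, hxpos]
        _ = y^2 * (1 + γs 0 / γ')^2 := by rw [mul_pow, sq_abs]
    have hD0lt : D0 < y^2 * E := by
      rw [hD0def, hEdef]; nlinarith
    calc γ' * D0 < γ' * (y^2 * E) := mul_lt_mul_of_pos_left hD0lt hγ'pos
      _ < x * (y^2 * E) := by
          have hyne : y ≠ 0 := abs_pos.mp hypos
          have hy2pos : 0 < y^2 := by nlinarith [hypos, sq_abs y]
          exact mul_lt_mul_of_pos_right hx (mul_pos hy2pos hEpos)
  have step1 : 2 * γ' * k₀ < 2 * x * y^2 * (c 0 / D0) := by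
    have hE' : k₀ = c 0 / E := hk₀
    rw [hE']
    rw [show 2 * γ' * (c 0 / E) = (2 * γ' * c 0) / E by ring,
        show 2 * x * y^2 * (c 0 / D0) = (2 * x * y^2 * c 0) / D0 by ring,
        div_lt_div_iff₀ hEpos hD0pos]
    nlinarith [mul_lt_mul_of_pos_left hDE (by linarith [hc 0] : (0:ℝ) < 2 * c 0)]
  have hQ0 : a ^ (2*ξ) * (c 0 / D0) ≤ a ^ (2*ξ) * G :=
    mul_le_mul_of_nonneg_left hG0 hA2pos.le
  have step2 : 2 * x * (a ^ (2*ξ) * (c 0 / D0)) ≤ (2 * x + a ^ (2*ξ) * G)^2 := by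
    nlinarith [hQ0, hxpos, mul_nonneg hA2pos.le hGnonneg, sq_nonneg x,
      sq_nonneg (a ^ (2*ξ) * G), mul_nonneg hA2pos.le (le_trans (div_nonneg (hc 0).le (hDpos 0).le) hG0)]
  calc a ^ (2 * ξ) * (2 * γ' * k₀)
      < a ^ (2 * ξ) * (2 * x * y^2 * (c 0 / D0)) := mul_lt_mul_of_pos_left step1 hA2pos
    _ = y^2 * (2 * x * (a ^ (2*ξ) * (c 0 / D0))) := by ring
    _ ≤ y^2 * (2 * x + a ^ (2*ξ) * G)^2 := mul_le_mul_of_nonneg_left step2 (sq_nonneg y)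
    _ = R^2 := by rw [hRdef, mul_pow, sq_abs]
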